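/- Let X be a random variable with values in a set S and Y a random variable on {0,1}^t such that the joint distribution (X, Y) is ε-close to (X, U_t) where U_t is uniform and independent of X. Then for every y ∈ {0,1}^t, the conditional distribution of X given Y = y is 2^{t+1}·ε-close to the distribution of X. -/

import Mathlib

open Finset Real
open scoped BigOperators Classical

/-- Bit strings of length `n`. -/
abbrev BS (n : ℕ) := Fin n → Bool

/-- `p` is a probability distribution on the finite type `Ω`. -/
def IsDist {Ω : Type*} [Fintype Ω] (p : Ω → ℝ) : Prop :=
  (∀ x, 0 ≤ p x) ∧ ∑ x, p x = 1

/-- Statistical distance between two distributions on a finite type. -/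
noncomputable def SD {Ω : Type*} [Fintype Ω] (p q : Ω → ℝ) : ℝ :=
  (∑ x, |p x - q x|) / 2

/-- The uniform distribution on a finite type. -/
noncomputable def unif (Ω : Type*) [Fintype Ω] : Ω → ℝ := fun _ => (Fintype.card Ω : ℝ)⁻¹

/-- Distribution of the random variable `X` on the finite probability space `(Ω, μ)`. -/
noncomputable def prDist {Ω A : Type*} [Fintype Ω] (μ : Ω → ℝ) (X : Ω → A) : A → ℝ :=
  fun a => ∑ ω ∈ univ.filter (fun ω => X ω = a), μ ω

/-- Min-entropy (base 2) of a distribution on a finite type. -/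
noncomputable def minEnt {A : Type*} [Fintype A] (p : A → ℝ) : ℝ :=
  - Real.logb 2 (⨆ a, p a)

/-- Conditional distribution of `X` given `W = w`. -/
noncomputable def condDist {Ω A B : Type*} [Fintype Ω] (μ : Ω → ℝ)
    (X : Ω → A) (W : Ω → B) (w : B) : A → ℝ :=
  fun a => prDist μ (fun ω => (X ω, W ω)) (a, w) / prDist μ W w

/-- Average conditional min-entropy `H̃∞(X | W)`. -/
noncomputable def avgCondMinEnt {Ω A B : Type*} [Fintype Ω] [Fintype A] [Fintype B]
    (μ : Ω → ℝ) (X : Ω → A) (W : Ω → B) : ℝ :=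
  - Real.logb 2 (∑ w, ⨆ a, prDist μ (fun ω => (X ω, W ω)) (a, w))

/-- First marginal of a joint distribution. -/
noncomputable def margFst {A B : Type*} [Fintype A] [Fintype B] (μ : A × B → ℝ) : A → ℝ :=
  fun a => ∑ b, μ (a, b)

/-- Second marginal of a joint distribution. -/
noncomputable def margSnd {A B : Type*} [Fintype A] [Fintype B] (μ : A × B → ℝ) : B → ℝ :=
  fun b => ∑ a, μ (a, b)

/-- Projection of a distribution on `r`-bit strings to the coordinates in `T`. -/
noncomputable def projDist {r : ℕ} (μ : (Fin r → Bool) → ℝ) (T : Finset (Fin r)) :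
    ({x // x ∈ T} → Bool) → ℝ :=
  fun w => ∑ z ∈ univ.filter (fun z : Fin r → Bool => ∀ i : {x // x ∈ T}, z i.1 = w i), μ z

/-- `Ext` is a strong seeded `(k, ε)`-extractor. -/
def IsStrongExt (n d m : ℕ) (k ε : ℝ) (Ext : BS n → BS d → BS m) : Prop :=
  ∀ p : BS n → ℝ, IsDist p → k ≤ minEnt p →
    SD (fun wy : BS m × BS d =>
          ∑ x ∈ univ.filter (fun x => Ext x wy.2 = wy.1), p x * unif (BS d) wy.2)
       (fun wy => unif (BS m) wy.1 * unif (BS d) wy.2) ≤ ε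

/-- `Ext` is a strong average-case seeded `(k, ε)`-extractor. -/
def IsStrongAvgExt (n d m : ℕ) (k ε : ℝ) (Ext : BS n → BS d → BS m) : Prop :=
  ∀ (T : Type) [Fintype T], ∀ μ : BS n × T → ℝ, IsDist μ →
    k ≤ avgCondMinEnt μ Prod.fst Prod.snd →
    SD (fun wyz : BS m × BS d × T =>
          ∑ x ∈ univ.filter (fun x => Ext x wyz.2.1 = wyz.1), μ (x, wyz.2.2) * unif (BS d) wyz.2.1)
       (fun wyz => unif (BS m) wyz.1 * unif (BS d) wyz.2.1 * margSnd μ wyz.2.2) ≤ ε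

/-- `M` is an `(L, 1, 0, ε, ε')`-non-malleable independence preserving merger
(single tampering adversary, uniform seed). -/
def IsNIPM1 (L m d m₁ : ℕ) (ε ε' : ℝ)
    (M : (Fin L → BS m) → BS d → BS m₁) : Prop :=
  ∀ (Ω : Type) [Fintype Ω], ∀ μ : Ω → ℝ, IsDist μ →
    ∀ (X X' : Ω → (Fin L → BS m)) (Y Y' : Ω → BS d),
      (∀ a b, prDist μ (fun ω => ((X ω, X' ω), (Y ω, Y' ω))) (a, b)
          = prDist μ (fun ω => (X ω, X' ω)) a * prDist μ (fun ω => (Y ω, Y' ω)) b) →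
      (d : ℝ) ≤ minEnt (prDist μ Y) →
      (∀ i : Fin L, SD (prDist μ (fun ω => X ω i)) (unif (BS m)) ≤ ε) →
      (∃ h : Fin L, SD (prDist μ (fun ω => (X ω h, X' ω h)))
          (fun p => unif (BS m) p.1 * prDist μ (fun ω => X' ω h) p.2) ≤ ε) →
      SD (prDist μ (fun ω => (M (X ω) (Y ω), M (X' ω) (Y' ω))))
         (fun p => unif (BS m₁) p.1 * prDist μ (fun ω => M (X' ω) (Y' ω)) p.2) ≤ ε'
/-- If `(X, Y)` is `ε`-close to `(X, U_t)`, then for every `y`, the conditional distribution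
of `X` given `Y = y` is `2^{t+1} ε`-close to the distribution of `X`. -/
lemma pm_decomp (a : ℝ) : max a 0 - max (-a) 0 = a := by
  rcases le_total a 0 with h|h <;> simp [max_eq_left, max_eq_right, *]

lemma pm_abs (a : ℝ) : |a| = max a 0 + max (-a) 0 := by
  rcases le_total a 0 with h|h <;> rcases abs_cases a <;>
    simp [max_eq_left, max_eq_right, *] <;> linarith

lemma pm_div (a c : ℝ) (hc : 0 < c) : max (a/c) 0 = max a 0 / c := by
  rw [← max_div_div_right hc.le, zero_div]

lemma aux2 (t : ℕ) (ε : ℝ) (hε : 0 ≤ ε) : ε / ((2:ℝ) ^ t)⁻¹ ≤ 2 ^ (t + 1) * ε := by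
  rw [div_eq_mul_inv, inv_inv, pow_succ]
  have h5 : (0:ℝ) ≤ 2 ^ t * ε := by positivity
  have h6 : (2:ℝ) ^ t * 2 * ε - ε * 2 ^ t = 2 ^ t * ε := by ring
  linarith

lemma pm_mono {a b : ℝ} (h : a ≤ b) : max a 0 ≤ max b 0 := max_le_max h le_rfl

theorem stmt8 {S : Type*} [Fintype S] (t : ℕ) (ε : ℝ)
    (μ : S × BS t → ℝ) (hμ : IsDist μ)
    (h : SD μ (fun p => margFst μ p.1 * unif (BS t) p.2) ≤ ε) :
    ∀ y : BS t, SD (fun x => μ (x, y) / margSnd μ y) (margFst μ) ≤ 2 ^ (t + 1) * ε := by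
  classical
  obtain ⟨hμ0, hμ1⟩ := hμ
  intro y
  set p : S → ℝ := margFst μ with hp
  set u : ℝ := ((2:ℝ) ^ t)⁻¹ with hu
  have hu0 : 0 < u := by positivity
  have hcard : (Fintype.card (BS t) : ℝ) = 2 ^ t := by simp [Fintype.card_fun]
  have hunif : ∀ z : BS t, unif (BS t) z = u := by
    intro z; simp [unif, hu, hcard]
  have hp0 : ∀ a, 0 ≤ p a := fun a => Finset.sum_nonneg fun b _ => hμ0 _
  have hp1 : ∑ a, p a = 1 := by
    rw [hp]
    simpa [margFst, Fintype.sum_prod_type] using hμ1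
  have hε0 : 0 ≤ ε := by
    refine le_trans ?_ h
    unfold SD
    positivity
  -- total distance fact
  have habs : ∑ q : S × BS t, |μ q - p q.1 * u| ≤ 2 * ε := by
    have h2 := h
    unfold SD at h2
    simp only [hunif] at h2
    linarith
  set f : S × BS t → ℝ := fun q => μ q - p q.1 * u with hf
  have hsum_pu : ∑ q : S × BS t, p q.1 * u = 1 := by
    rw [Fintype.sum_prod_type]
    have hA : ∀ a : S, ∑ _b : BS t, p a * u = p a := by
      intro a
      rw [Finset.sum_const, Finset.card_univ, nsmul_eq_mul, hcard, hu]
      field_simp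
    simp only [hA, hp1]
  have hfsum : ∑ q, f q = 0 := by
    simp only [hf, Finset.sum_sub_distrib, hμ1, hsum_pu, sub_self]
  set P : ℝ := ∑ q : S × BS t, max (f q) 0 with hP
  set N : ℝ := ∑ q : S × BS t, max (-(f q)) 0 with hN
  have hPN1 : P - N = 0 := by
    rw [hP, hN, ← Finset.sum_sub_distrib]
    simp only [pm_decomp]; exact hfsum
  have hPN2 : P + N ≤ 2 * ε := by
    rw [hP, hN, ← Finset.sum_add_distrib]
    simpa only [← pm_abs] using habs
  set Ap : ℝ := ∑ x, max (f (x, y)) 0 with hAp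
  set An : ℝ := ∑ x, max (-(f (x, y))) 0 with hAn
  have hAp0 : 0 ≤ Ap := Finset.sum_nonneg fun x _ => le_max_right _ _
  have hAn0 : 0 ≤ An := Finset.sum_nonneg fun x _ => le_max_right _ _
  have hApP : Ap ≤ P := by
    rw [hP, Fintype.sum_prod_type, hAp]
    refine Finset.sum_le_sum fun x _ => ?_
    exact Finset.single_le_sum (f := fun b => max (f (x, b)) 0)
      (fun b _ => le_max_right _ _) (Finset.mem_univ y)
  have hAnN : An ≤ N := by
    rw [hN, Fintype.sum_prod_type, hAn]
    refine Finset.sum_le_sum fun x _ => ?_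
    exact Finset.single_le_sum (f := fun b => max (-(f (x, b))) 0)
      (fun b _ => le_max_right _ _) (Finset.mem_univ y)
  have hApe : Ap ≤ ε := by linarith
  have hAne : An ≤ ε := by linarith
  set s : ℝ := margSnd μ y with hs
  have hs_eq : s = ∑ x, μ (x, y) := rfl
  have hs0 : 0 ≤ s := Finset.sum_nonneg fun x _ => hμ0 _
  have hApAn : Ap - An = s - u := by
    rw [hAp, hAn, ← Finset.sum_sub_distrib]
    simp only [pm_decomp]
    rw [hf]
    simp only
    rw [Finset.sum_sub_distrib, ← hs_eq, ← Finset.sum_mul, hp1, one_mul]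
  have hEu : (2:ℝ) ^ (t + 1) * ε * u = 2 * ε := by
    rw [hu, pow_succ]
    field_simp
  rcases le_or_gt 1 ((2:ℝ) ^ (t + 1) * ε) with hc | hc
  · -- trivial case: SD ≤ 1
    refine le_trans ?_ hc
    unfold SD
    have hb : ∑ x, |μ (x, y) / s - p x| ≤ ∑ x, (μ (x, y) / s + p x) := by
      refine Finset.sum_le_sum fun x _ => ?_
      have h1 : 0 ≤ μ (x, y) / s := div_nonneg (hμ0 _) hs0
      have h2 := hp0 x
      rw [abs_sub_le_iff]
      constructor <;> linarith
    have hcond : ∑ x, μ (x, y) / s = s / s := by rw [← Finset.sum_div, ← hs_eq]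
    have hss : s / s ≤ 1 := by
      rcases eq_or_lt_of_le hs0 with h'|h'
      · simp [← h']
      · rw [div_self h'.ne']
    rw [Finset.sum_add_distrib, hcond, hp1] at hb
    linarith
  · -- main case
    have hE0 : 0 ≤ (2:ℝ) ^ (t + 1) * ε := by positivity
    have hεu : 2 * ε < u := by nlinarith
    have hslb : u - An ≤ s := by linarith
    have hs0' : 0 < s := by linarith
    -- SD of conditional distribution equals both positive and negative parts
    set g : S → ℝ := fun x => μ (x, y) / s - p x with hg
    have hgsum : ∑ x, g x = 0 := by
      simp only [hg, Finset.sum_sub_distrib, hp1, ← Finset.sum_div, ← hs_eq,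
        div_self hs0'.ne', sub_self]
    set Gp : ℝ := ∑ x, max (g x) 0 with hGp
    set Gn : ℝ := ∑ x, max (-(g x)) 0 with hGn
    have hGpn : Gp - Gn = 0 := by
      rw [hGp, hGn, ← Finset.sum_sub_distrib]
      simp only [pm_decomp]; exact hgsum
    have hSD : SD (fun x => μ (x, y) / s) p = (Gp + Gn) / 2 := by
      unfold SD
      rw [hGp, hGn, ← Finset.sum_add_distrib]
      congr 1
      refine Finset.sum_congr rfl fun x _ => ?_
      rw [← pm_abs]
    rcases le_or_gt u s with hus | hus
    · -- s ≥ u : SD = Gp ≤ Ap / s ≤ ε / u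
      have hGple : Gp ≤ Ap / s := by
        rw [hGp, hAp, Finset.sum_div]
        refine Finset.sum_le_sum fun x _ => ?_
        have : g x = (μ (x, y) - s * p x) / s := by
          rw [hg]; field_simp
        rw [this, pm_div _ _ hs0']
        gcongr
        have h' : u * p x ≤ s * p x := mul_le_mul_of_nonneg_right hus (hp0 x)
        have h'' : p x * u = u * p x := mul_comm _ _
        simp only [hf]
        linarith
      have h1 : Ap / s ≤ ε / u := by
        apply div_le_div₀ hε0 hApe hu0 hus
      have h2 : ε / u ≤ 2 ^ (t + 1) * ε := by
        rw [hu]; exact aux2 t ε hε0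
      rw [hSD]
      linarith
    · -- s < u : SD = Gn ≤ An / s ≤ E
      have hGnle : Gn ≤ An / s := by
        rw [hGn, hAn, Finset.sum_div]
        refine Finset.sum_le_sum fun x _ => ?_
        have : -g x = (s * p x - μ (x, y)) / s := by
          rw [hg]; field_simp; ring
        rw [this, pm_div _ _ hs0']
        gcongr
        have h' : s * p x ≤ u * p x := mul_le_mul_of_nonneg_right hus.le (hp0 x)
        have h'' : p x * u = u * p x := mul_comm _ _
        simp only [hf]
        linarith
      have hkey : An ≤ 2 ^ (t + 1) * ε * s := by
        have h3 : 2 ^ (t + 1) * ε * (u - An) ≤ 2 ^ (t + 1) * ε * s :=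
          mul_le_mul_of_nonneg_left hslb hE0
        rw [mul_sub] at h3
        have h4 : 2 ^ (t + 1) * ε * An ≤ 1 * ε :=
          mul_le_mul hc.le hAne hAn0 zero_le_one
        linarith
      have h1 : An / s ≤ 2 ^ (t + 1) * ε := by
        rw [div_le_iff₀ hs0']; exact hkey
      rw [hSD]
      linarith
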